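/- Under the same setup, the maximum over h ∈ F of E_{Z∼Π'}[h(Z)] is at most min(p + (1 − |S∩S'|/|S|), 1). -/

import Mathlib

/-- Variational upper bound: any `[0,1]`-valued `h` with mean `p` under
the uniform distribution on `S` has mean at most `min(p + (1 − |S∩S'|/|S|), 1)` under
the uniform distribution on `S'` when `|S'| = |S|`. -/
theorem variational_upper_bound {α : Type*} [DecidableEq α]
    (S S' : Finset α) (hS : S.Nonempty) (hS' : S'.Nonempty)
    (hcard : S'.card = S.card)
    (p : ℝ) (hp : p ∈ Set.Icc (0 : ℝ) 1) (hint : ∃ k : ℕ, p * (S.card : ℝ) = (k : ℝ))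
    (h : α → ℝ) (hh : ∀ z, h z ∈ Set.Icc (0 : ℝ) 1)
    (hmean : (∑ z ∈ S, h z) / (S.card : ℝ) = p) :
    (∑ z ∈ S', h z) / (S'.card : ℝ)
      ≤ min (p + (1 - ((S ∩ S').card : ℝ) / (S.card : ℝ))) 1 := by
  have hScard : (0 : ℝ) < (S.card : ℝ) := by exact_mod_cast Finset.card_pos.mpr hS
  have hS'card : (0 : ℝ) < (S'.card : ℝ) := by exact_mod_cast Finset.card_pos.mpr hS'
  refine le_min ?_ ?_
  · -- ∑_{S'} h ≤ ∑_{S∩S'} h + |S' \ S| ≤ p|S| + |S'| - |S∩S'|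
    rw [div_le_iff₀ hS'card]
    have hsplit : (∑ z ∈ S', h z)
        = (∑ z ∈ S' ∩ S, h z) + (∑ z ∈ S' \ S, h z) := by
      rw [Finset.sum_inter_add_sum_sdiff]
    have h1 : (∑ z ∈ S' ∩ S, h z) ≤ ∑ z ∈ S, h z :=
      Finset.sum_le_sum_of_subset_of_nonneg (Finset.inter_subset_right)
        (fun i _ _ => (hh i).1)
    have h2 : (∑ z ∈ S' \ S, h z) ≤ ((S' \ S).card : ℝ) := by
      calc (∑ z ∈ S' \ S, h z) ≤ ∑ _z ∈ S' \ S, (1 : ℝ) :=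
            Finset.sum_le_sum (fun i _ => (hh i).2)
        _ = ((S' \ S).card : ℝ) := by simp
    have hsumS : (∑ z ∈ S, h z) = p * (S.card : ℝ) := by
      field_simp at hmean; linarith [hmean]
    have hdiff : ((S' \ S).card : ℝ) = (S'.card : ℝ) - ((S ∩ S').card : ℝ) := by
      rw [Finset.inter_comm]
      have := Finset.card_sdiff_add_card_inter S' S
      have : ((S' \ S).card : ℝ) + ((S' ∩ S).card : ℝ) = (S'.card : ℝ) := by
        exact_mod_cast congrArg (Nat.cast : ℕ → ℝ) this
      linarith
    have : (∑ z ∈ S', h z) ≤ p * (S.card : ℝ) + (S'.card : ℝ) - ((S ∩ S').card : ℝ) := by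
      rw [hsplit]; rw [hdiff] at h2; linarith
    have hrw : (p + (1 - ((S ∩ S').card : ℝ) / (S.card : ℝ))) * (S'.card : ℝ)
        = p * (S.card : ℝ) + (S'.card : ℝ) - ((S ∩ S').card : ℝ) := by
      rw [hcard, add_mul, sub_mul, one_mul, div_mul_cancel₀ _ hScard.ne']; ring
    linarith [hrw]
  · rw [div_le_one hS'card]
    calc (∑ z ∈ S', h z) ≤ ∑ _z ∈ S', (1 : ℝ) :=
          Finset.sum_le_sum (fun i _ => (hh i).2)
      _ = (S'.card : ℝ) := by simp
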